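/- Let V be an F_q-subspace of M_n(F_q) in which every nonzero matrix is invertible. Then dim V ≤ n. -/

import Mathlib

/-- A subspace of n×n matrices over a finite field in which every nonzero element is
invertible has dimension at most n. -/
theorem spreadSet_dim_le
    (n : ℕ) (F : Type*) [Field F] [Fintype F]
    (V : Submodule F (Matrix (Fin n) (Fin n) F))
    (hinv : ∀ M ∈ V, M ≠ 0 → IsUnit M) :
    Module.finrank F V ≤ n := by
  classical
  rcases Nat.eq_zero_or_pos n with hn | hn
  · subst hn
    have : Subsingleton (Matrix (Fin 0) (Fin 0) F) := by
      constructor; intro a b; ext i j; exact absurd i.2 (by omega)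
    have : Subsingleton V := ⟨fun a b => Subtype.ext (Subsingleton.elim _ _)⟩
    simp [Module.finrank_zero_of_subsingleton]
  · set e : Fin n → F := fun _ => 1 with he
    have he0 : e ≠ 0 := by
      intro h
      have := congrFun h ⟨0, hn⟩
      simp [he] at this
    let f : V →ₗ[F] (Fin n → F) :=
      { toFun := fun M => (M : Matrix (Fin n) (Fin n) F).mulVec e
        map_add' := fun M N => Matrix.add_mulVec _ _ _
        map_smul' := fun c M => by
          simp [Matrix.smul_mulVec] }
    have hinj : Function.Injective f := by
      rw [← LinearMap.ker_eq_bot, LinearMap.ker_eq_bot']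
      intro M hM
      by_contra hM0
      have hMne : (M : Matrix (Fin n) (Fin n) F) ≠ 0 := by
        intro h; exact hM0 (Subtype.ext h)
      have hu := hinv M M.2 hMne
      have : Function.Injective ((M : Matrix (Fin n) (Fin n) F).mulVec) :=
        Matrix.mulVec_injective_iff_isUnit.mpr hu
      have : e = 0 := by
        apply this
        rw [Matrix.mulVec_zero]; exact hM
      exact he0 this
    calc Module.finrank F V ≤ Module.finrank F (Fin n → F) :=
          LinearMap.finrank_le_finrank_of_injective hinj
      _ = n := by simp
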